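/- For every φ ∈ (0, π/2), X, T, ρ ∈ ℝ and every fixed x ∈ ℝ, lim_{t → −∞} e^{−Σ(φ)(t−T)} · ( e^{−2it − iρ + 2iφ} A(x,t; φ, X, T, ρ) − 1 ) = 2 sin(2φ) e^{iφ} cos(K(φ)(x−X)). (This is the matching of the breather, in the intermediate time region, with an exponentially growing sinusoidal solution of the linearized theory.) -/

import Mathlib

open Complex

/-- Wave number `K(φ) = 2 cos φ`. -/
noncomputable def Kfreq (φ : ℝ) : ℝ := 2 * Real.cos φ

/-- Growth rate `Σ(φ) = 2 sin(2φ)`. -/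
noncomputable def Sfreq (φ : ℝ) : ℝ := 2 * Real.sin (2 * φ)

/-- The Akhmediev one-breather `A(x,t; φ, X, T, ρ)`. -/
noncomputable def akhmediev (φ X T ρ : ℝ) (x t : ℝ) : ℂ :=
  Complex.exp (2 * (t : ℂ) * Complex.I + (ρ : ℂ) * Complex.I) *
    (Complex.cosh ((Sfreq φ * (t - T) : ℝ) + 2 * (φ : ℂ) * Complex.I)
      + (Real.sin φ : ℂ) * (Real.cos (Kfreq φ * (x - X)) : ℂ)) /
    (Complex.cosh ((Sfreq φ * (t - T) : ℝ))
      - (Real.sin φ : ℂ) * (Real.cos (Kfreq φ * (x - X)) : ℂ))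

open Filter in
lemma auxReal1 (c : ℝ) : Tendsto (fun s : ℝ => (Real.cosh s - c)⁻¹) atBot (nhds 0) := by
  apply Tendsto.inv_tendsto_atTop
  apply tendsto_atTop_mono (f := fun s : ℝ => Real.exp (-s) / 2 - c)
  · intro s
    have := Real.exp_pos s
    rw [Real.cosh_eq]
    nlinarith
  · apply tendsto_atTop_add_const_right
    apply Tendsto.atTop_div_const two_pos
    exact Real.tendsto_exp_atTop.comp tendsto_neg_atBot_atTop

open Filter in
lemma auxReal2 (c : ℝ) (hc : c < 1) :
    Tendsto (fun s : ℝ => Real.exp (-s) / (Real.cosh s - c)) atBot (nhds 2) := by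
  have hpos : ∀ s : ℝ, 0 < Real.cosh s - c := fun s => by
    have := Real.one_le_cosh s; linarith
  have key : ∀ s : ℝ, Real.exp (-s) / (Real.cosh s - c)
      = 2 / (Real.exp s * Real.exp s + 1 - 2 * c * Real.exp s) := by
    intro s
    have h1 : Real.cosh s - c ≠ 0 := (hpos s).ne'
    have h2 : Real.exp s * Real.exp s + 1 - 2 * c * Real.exp s
        = 2 * Real.exp s * (Real.cosh s - c) := by
      rw [Real.cosh_eq, Real.exp_neg]
      field_simp
    rw [h2, Real.exp_neg]
    have h3 : Real.exp s ≠ 0 := (Real.exp_pos s).ne'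
    field_simp
  simp only [key]
  have hden : Tendsto (fun s : ℝ =>
      Real.exp s * Real.exp s + 1 - 2 * c * Real.exp s) atBot (nhds 1) := by
    have he : Tendsto Real.exp atBot (nhds 0) := Real.tendsto_exp_atBot
    have := ((he.mul he).add_const 1).sub (he.const_mul (2 * c))
    simpa using this
  have := (tendsto_const_nhds (x := (2:ℝ))).div hden one_ne_zero
  rw [div_one] at this
  exact this

open Filter in
lemma auxMain (φ c : ℝ) (hc : c < 1) :
    Tendsto (fun s : ℝ =>
      Complex.exp (-((s : ℝ) : ℂ)) *
        (Complex.exp (2 * (φ : ℂ) * Complex.I) *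
            (Complex.cosh (((s : ℝ) : ℂ) + 2 * (φ : ℂ) * Complex.I) + (c : ℂ))
          / (Complex.cosh (((s : ℝ) : ℂ)) - (c : ℂ)) - 1))
      atBot
      (nhds (2 * (c : ℂ) * (Complex.exp (2 * (φ : ℂ) * Complex.I) + 1))) := by
  have hpos : ∀ s : ℝ, 0 < Real.cosh s - c := fun s => by
    have := Real.one_le_cosh s; linarith
  have key : ∀ s : ℝ,
      Complex.exp (-((s : ℝ) : ℂ)) *
        (Complex.exp (2 * (φ : ℂ) * Complex.I) *
            (Complex.cosh (((s : ℝ) : ℂ) + 2 * (φ : ℂ) * Complex.I) + (c : ℂ))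
          / (Complex.cosh (((s : ℝ) : ℂ)) - (c : ℂ)) - 1)
      = (Complex.exp (4 * (φ : ℂ) * Complex.I) - 1) / 2
          * (((Real.cosh s - c)⁻¹ : ℝ) : ℂ)
        + (c : ℂ) * (Complex.exp (2 * (φ : ℂ) * Complex.I) + 1)
          * ((Real.exp (-s) / (Real.cosh s - c) : ℝ) : ℂ) := by
    intro s
    have hD : Complex.cosh ((s : ℝ) : ℂ) - (c : ℂ) = ((Real.cosh s - c : ℝ) : ℂ) := by
      push_cast [← Complex.ofReal_cosh]; ring
    have hDne : ((Real.cosh s - c : ℝ) : ℂ) ≠ 0 :=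
      Complex.ofReal_ne_zero.mpr (hpos s).ne'
    have hEne : Complex.exp ((s : ℝ) : ℂ) ≠ 0 := Complex.exp_ne_zero _
    have hFne : Complex.exp (2 * (φ : ℂ) * Complex.I) ≠ 0 := Complex.exp_ne_zero _
    have e1 : Complex.exp (((s : ℝ) : ℂ) + 2 * (φ : ℂ) * Complex.I)
        = Complex.exp ((s : ℝ) : ℂ) * Complex.exp (2 * (φ : ℂ) * Complex.I) :=
      Complex.exp_add _ _
    have e2 : Complex.exp (-(((s : ℝ) : ℂ) + 2 * (φ : ℂ) * Complex.I))
        = (Complex.exp ((s : ℝ) : ℂ))⁻¹ * (Complex.exp (2 * (φ : ℂ) * Complex.I))⁻¹ := by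
      rw [neg_add, Complex.exp_add, Complex.exp_neg, Complex.exp_neg]
    have e3 : Complex.exp (-((s : ℝ) : ℂ)) = (Complex.exp ((s : ℝ) : ℂ))⁻¹ :=
      Complex.exp_neg _
    have e4 : Complex.exp (4 * (φ : ℂ) * Complex.I)
        = Complex.exp (2 * (φ : ℂ) * Complex.I) * Complex.exp (2 * (φ : ℂ) * Complex.I) := by
      rw [← Complex.exp_add]; ring_nf
    have hcosh : ((Real.exp (-s) / (Real.cosh s - c) : ℝ) : ℂ)
        = (Complex.exp ((s : ℝ) : ℂ))⁻¹ / ((Real.cosh s - c : ℝ) : ℂ) := by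
      push_cast [Real.exp_neg, ← Complex.ofReal_exp]
      rfl
    have hX : ((Real.cosh s - c : ℝ) : ℂ)
        = (Complex.exp ((s : ℝ) : ℂ) + (Complex.exp ((s : ℝ) : ℂ))⁻¹) / 2 - (c : ℂ) := by
      rw [Real.cosh_eq, Real.exp_neg]
      push_cast [← Complex.ofReal_exp]
      rfl
    rw [Complex.ofReal_inv, hcosh, e3]
    rw [show Complex.cosh (((s : ℝ) : ℂ) + 2 * (φ : ℂ) * Complex.I)
        = (Complex.exp (((s : ℝ) : ℂ) + 2 * (φ : ℂ) * Complex.I)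
          + Complex.exp (-(((s : ℝ) : ℂ) + 2 * (φ : ℂ) * Complex.I))) / 2 from rfl,
      e1, e2, e4]
    simp only [hD]
    set E : ℂ := Complex.exp ((s : ℝ) : ℂ) with hE
    set F : ℂ := Complex.exp (2 * (φ : ℂ) * Complex.I) with hF
    set X : ℂ := ((Real.cosh s - c : ℝ) : ℂ) with hXdef
    have step1 : E⁻¹ * (F * ((E * F + E⁻¹ * F⁻¹) / 2 + (c : ℂ)) / X - 1)
        = E⁻¹ * (F * ((E * F + E⁻¹ * F⁻¹) / 2 + (c : ℂ)) - X) / X := by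
      field_simp
    have step2 : (F * F - 1) / 2 * X⁻¹ + (c : ℂ) * (F + 1) * (E⁻¹ / X)
        = ((F * F - 1) / 2 + (c : ℂ) * (F + 1) * E⁻¹) / X := by
      field_simp
    rw [step1, step2]
    congr 1
    rw [hX]
    have hEi : E * E⁻¹ = 1 := mul_inv_cancel₀ hEne
    have hFi : F * F⁻¹ = 1 := mul_inv_cancel₀ hFne
    linear_combination (F * F / 2 - 1 / 2) * hEi + (E⁻¹ * E⁻¹ / 2) * hFi
  simp only [key]
  have h1 : Tendsto (fun s : ℝ => (((Real.cosh s - c)⁻¹ : ℝ) : ℂ)) atBot (nhds 0) := by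
    have := (Complex.continuous_ofReal.tendsto 0).comp (auxReal1 c)
    simpa only [Function.comp_def, Complex.ofReal_zero] using this
  have h2 : Tendsto (fun s : ℝ => ((Real.exp (-s) / (Real.cosh s - c) : ℝ) : ℂ))
      atBot (nhds 2) := by
    have := (Complex.continuous_ofReal.tendsto 2).comp (auxReal2 c hc)
    simpa only [Function.comp_def, Complex.ofReal_ofNat] using this
  have := (h1.const_mul ((Complex.exp (4 * (φ : ℂ) * Complex.I) - 1) / 2)).add
    (h2.const_mul ((c : ℂ) * (Complex.exp (2 * (φ : ℂ) * Complex.I) + 1)))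
  simpa [mul_comm, mul_assoc, mul_left_comm] using this

/-- for every fixed `x`,
`lim_{t → −∞} e^{−Σ(φ)(t−T)} ( e^{−2it − iρ + 2iφ} A(x,t) − 1 )
  = 2 sin(2φ) e^{iφ} cos(K(φ)(x−X))`,
the matching of the breather with an exponentially growing sinusoidal solution of the
linearized theory in the intermediate time region. -/
theorem akhmediev_matching_linear (φ X T ρ : ℝ) (hφ0 : 0 < φ) (hφ1 : φ < Real.pi / 2)
    (x : ℝ) :
    Filter.Tendsto
      (fun t : ℝ =>
        Complex.exp (-((Sfreq φ * (t - T) : ℝ) : ℂ)) *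
          (Complex.exp (-(2 * (t : ℂ) * Complex.I) - (ρ : ℂ) * Complex.I
              + 2 * (φ : ℂ) * Complex.I) * akhmediev φ X T ρ x t - 1))
      Filter.atBot
      (nhds (((2 * Real.sin (2 * φ) : ℝ) : ℂ) * Complex.exp ((φ : ℂ) * Complex.I)
        * ((Real.cos (Kfreq φ * (x - X)) : ℝ) : ℂ))) := by
  set c : ℝ := Real.sin φ * Real.cos (Kfreq φ * (x - X)) with hc_def
  have hsin1 : Real.sin φ < 1 := by
    have := Real.sin_lt_sin_of_lt_of_le_pi_div_two
      (x := φ) (y := Real.pi / 2) (by linarith [Real.pi_pos]) le_rfl hφ1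
    simpa using this
  have hsin0 : 0 < Real.sin φ := Real.sin_pos_of_pos_of_lt_pi hφ0 (by linarith [Real.pi_pos])
  have hc : c < 1 := by
    calc c ≤ |c| := le_abs_self c
    _ = Real.sin φ * |Real.cos (Kfreq φ * (x - X))| := by
        rw [abs_mul, abs_of_pos hsin0]
    _ ≤ Real.sin φ * 1 := by
        gcongr; exact Real.abs_cos_le_one _
    _ < 1 := by linarith
  have heq : (fun t : ℝ =>
        Complex.exp (-((Sfreq φ * (t - T) : ℝ) : ℂ)) *
          (Complex.exp (-(2 * (t : ℂ) * Complex.I) - (ρ : ℂ) * Complex.I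
              + 2 * (φ : ℂ) * Complex.I) * akhmediev φ X T ρ x t - 1))
      = ((fun s : ℝ =>
          Complex.exp (-((s : ℝ) : ℂ)) *
            (Complex.exp (2 * (φ : ℂ) * Complex.I) *
                (Complex.cosh (((s : ℝ) : ℂ) + 2 * (φ : ℂ) * Complex.I) + (c : ℂ))
              / (Complex.cosh (((s : ℝ) : ℂ)) - (c : ℂ)) - 1))
          ∘ fun t : ℝ => Sfreq φ * (t - T)) := by
    funext t
    simp only [Function.comp, akhmediev, hc_def]
    push_cast
    have hee : Complex.exp (-(2 * (t : ℂ) * Complex.I) - (ρ : ℂ) * Complex.I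
          + 2 * (φ : ℂ) * Complex.I) * Complex.exp (2 * (t : ℂ) * Complex.I + (ρ : ℂ) * Complex.I)
        = Complex.exp (2 * (φ : ℂ) * Complex.I) := by
      rw [← Complex.exp_add]; ring_nf
    rw [← mul_div_assoc, ← mul_assoc, hee, mul_div_assoc]
  have hcomp : Filter.Tendsto (fun t : ℝ => Sfreq φ * (t - T)) Filter.atBot Filter.atBot := by
    have hS : 0 < Sfreq φ := by
      have : 0 < Real.sin (2 * φ) :=
        Real.sin_pos_of_pos_of_lt_pi (by linarith) (by linarith)
      simp only [Sfreq]; linarith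
    have ht : Filter.Tendsto (fun t : ℝ => t - T) Filter.atBot Filter.atBot := by
      simpa [sub_eq_add_neg] using
        Filter.tendsto_atBot_add_const_right Filter.atBot (-T) Filter.tendsto_id
    exact ht.const_mul_atBot hS
  have hlim := (auxMain φ c hc).comp hcomp
  have hval : 2 * (c : ℂ) * (Complex.exp (2 * (φ : ℂ) * Complex.I) + 1)
      = ((2 * Real.sin (2 * φ) : ℝ) : ℂ) * Complex.exp ((φ : ℂ) * Complex.I)
        * ((Real.cos (Kfreq φ * (x - X)) : ℝ) : ℂ) := by
    have ha : Complex.exp ((φ : ℂ) * Complex.I) * Complex.exp ((φ : ℂ) * Complex.I)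
        = Complex.exp (2 * (φ : ℂ) * Complex.I) := by
      rw [← Complex.exp_add]; ring_nf
    have hb : Complex.exp ((φ : ℂ) * Complex.I) * Complex.exp (-(φ : ℂ) * Complex.I)
        = 1 := by
      rw [← Complex.exp_add]; simp
    have h1 : Complex.exp (2 * (φ : ℂ) * Complex.I) + 1
        = 2 * Complex.exp ((φ : ℂ) * Complex.I) * Complex.cos (φ : ℂ) := by
      rw [Complex.cos]
      linear_combination -ha - hb
    rw [h1, hc_def]
    rw [show Complex.cos (φ : ℂ) = ((Real.cos φ : ℝ) : ℂ) from (Complex.ofReal_cos φ).symm]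
    push_cast [Real.sin_two_mul]
    ring
  rw [heq, ← hval]
  exact hlim
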